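/- In a 2-agent m×n general-sum game, if the projected partial derivatives at a strategy pair (α*,β*) ∈ Δ₁×Δ₂ are zero, i.e., P_{Δ₁}(α*, ∂_α V_r(α*,β*)) = 0 and P_{Δ₂}(β*, ∂_β V_c(α*,β*)) = 0, then (α*,β*) is a Nash equilibrium. -/

import Mathlib

/- Common framework for 2-agent m×n general-sum normal-form games
   (parametrized so the game has (m+1) × (n+1) actions and independent
   strategy coordinates live in ℝ^m and ℝ^n). -/

open Matrix Filter Topology
open scoped RealInnerProductSpace

noncomputable section

/-- Strategy space carrier: ℝ^m with the Euclidean structure. -/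
abbrev Str (m : ℕ) := EuclideanSpace ℝ (Fin m)

/-- The valid strategy set Δ = {x : xᵢ ≥ 0, ∑ xᵢ ≤ 1}. -/
def simplexSet (m : ℕ) : Set (Str m) := {x | (∀ i, 0 ≤ x i) ∧ ∑ i, x i ≤ 1}

/-- α̃ = (α ; 1 − eᵀα). -/
def tilde {m : ℕ} (x : Str m) : Fin (m + 1) → ℝ :=
  Fin.snoc (fun i => x i) (1 - ∑ i, x i)

/-- Row player's expected payoff V_r(α, β) = α̃ᵀ R β̃. -/
def Vr {m n : ℕ} (R : Matrix (Fin (m + 1)) (Fin (n + 1)) ℝ) (α : Str m) (β : Str n) : ℝ :=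
  tilde α ⬝ᵥ (R *ᵥ tilde β)

/-- Column player's expected payoff V_c(α, β) = α̃ᵀ C β̃. -/
def Vc {m n : ℕ} (C : Matrix (Fin (m + 1)) (Fin (n + 1)) ℝ) (α : Str m) (β : Str n) : ℝ :=
  tilde α ⬝ᵥ (C *ᵥ tilde β)

/-- ∂_α V_r(α, β) (gradient of the affine map α ↦ V_r(α, β)). -/
def gradR {m n : ℕ} (R : Matrix (Fin (m + 1)) (Fin (n + 1)) ℝ) (β : Str n) : Str m :=
  (WithLp.equiv 2 _).symm fun i : Fin m =>
    (R *ᵥ tilde β) i.castSucc - (R *ᵥ tilde β) (Fin.last m)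

/-- ∂_β V_c(α, β) (gradient of the affine map β ↦ V_c(α, β)). -/
def gradC {m n : ℕ} (C : Matrix (Fin (m + 1)) (Fin (n + 1)) ℝ) (α : Str m) : Str n :=
  (WithLp.equiv 2 _).symm fun j : Fin n =>
    (Cᵀ *ᵥ tilde α) j.castSucc - (Cᵀ *ᵥ tilde α) (Fin.last n)

/-- (α, β) is a Nash equilibrium. -/
def IsNash {m n : ℕ} (R C : Matrix (Fin (m + 1)) (Fin (n + 1)) ℝ)
    (α : Str m) (β : Str n) : Prop :=
  α ∈ simplexSet m ∧ β ∈ simplexSet n ∧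
    (∀ α' ∈ simplexSet m, Vr R α' β ≤ Vr R α β) ∧
    (∀ β' ∈ simplexSet n, Vc C α β' ≤ Vc C α β)

/-- `P` is the Euclidean nearest-point projection onto `Δ`. -/
def IsProjOn {m : ℕ} (Δ : Set (Str m)) (P : Str m → Str m) : Prop :=
  ∀ x, P x ∈ Δ ∧ ∀ z ∈ Δ, dist x (P x) ≤ dist x z

/-- δ = max entry − min entry of a payoff matrix. -/
def matSpread {m n : ℕ} (M : Matrix (Fin (m + 1)) (Fin (n + 1)) ℝ) : ℝ :=
  (Finset.univ.sup' Finset.univ_nonempty fun p : Fin (m + 1) × Fin (n + 1) => M p.1 p.2)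
  - (Finset.univ.inf' Finset.univ_nonempty fun p : Fin (m + 1) × Fin (n + 1) => M p.1 p.2)

/-- Conditions 1–3 on the initial prediction length γ₀ and the step size η. -/
def Conds {m n : ℕ} (R C : Matrix (Fin (m + 1)) (Fin (n + 1)) ℝ) (γ₀ η : ℝ) : Prop :=
  0 < γ₀ ∧ 0 < η ∧
  4 * γ₀ ^ 2 * matSpread R * matSpread C < 1 ∧
  η < 1 / (matSpread R + matSpread C) ∧ γ₀ < 1 / (matSpread R + matSpread C)

/-- Both agents follow GA-SPP: `a`,`b` are the strategies, `abar`,`bbar` the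
predictions, `γ` the prediction lengths, `η` the step size, `P₁`,`P₂` the
projections onto the respective simplices. -/
def GASPPRun {m n : ℕ} (R C : Matrix (Fin (m + 1)) (Fin (n + 1)) ℝ)
    (P₁ : Str m → Str m) (P₂ : Str n → Str n) (η : ℝ) (γ : ℕ → ℝ)
    (a abar : ℕ → Str m) (b bbar : ℕ → Str n) : Prop :=
  ∀ k : ℕ,
    abar (k + 1) = P₁ (a k + γ k • gradR R (b k)) ∧
    bbar (k + 1) = P₂ (b k + γ k • gradC C (a k)) ∧
    ((abar (k + 1) = a k ∧ bbar (k + 1) = b k) →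
        a (k + 1) = a k ∧ b (k + 1) = b k ∧ γ (k + 1) = γ k) ∧
    (¬(abar (k + 1) = a k ∧ bbar (k + 1) = b k) →
        a (k + 1) = P₁ (a k + η • gradR R (bbar (k + 1))) ∧
        b (k + 1) = P₂ (b k + η • gradC C (abar (k + 1))) ∧
        ((a (k + 1) = a k ∧ b (k + 1) = b k) →
            ∃ μ : ℝ, 0 < μ ∧ μ < 1 ∧ γ (k + 1) = μ * γ k) ∧
        (¬(a (k + 1) = a k ∧ b (k + 1) = b k) → γ (k + 1) = γ k))

/-- The row agent follows GA-SPP while the column agent follows basic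
gradient ascent (GA), based on the opponent's current strategy. -/
def GASPPvsGARun {m n : ℕ} (R C : Matrix (Fin (m + 1)) (Fin (n + 1)) ℝ)
    (P₁ : Str m → Str m) (P₂ : Str n → Str n) (η : ℝ) (γ : ℕ → ℝ)
    (a abar : ℕ → Str m) (b bbar : ℕ → Str n) : Prop :=
  ∀ k : ℕ,
    abar (k + 1) = P₁ (a k + γ k • gradR R (b k)) ∧
    bbar (k + 1) = P₂ (b k + γ k • gradC C (a k)) ∧
    ((abar (k + 1) = a k ∧ bbar (k + 1) = b k) →
        a (k + 1) = a k ∧ b (k + 1) = b k ∧ γ (k + 1) = γ k) ∧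
    (¬(abar (k + 1) = a k ∧ bbar (k + 1) = b k) →
        a (k + 1) = P₁ (a k + η • gradR R (bbar (k + 1))) ∧
        b (k + 1) = P₂ (b k + η • gradC C (a k)) ∧
        ((a (k + 1) = a k ∧ b (k + 1) = b k) →
            ∃ μ : ℝ, 0 < μ ∧ μ < 1 ∧ γ (k + 1) = μ * γ k) ∧
        (¬(a (k + 1) = a k ∧ b (k + 1) = b k) → γ (k + 1) = γ k))

/-- The normalized value function Φ(v, w) = V_r(α¹, β²) + V_c(α², β¹),
for v = (α¹, β¹), w = (α², β²). -/
def Phi {m n : ℕ} (R C : Matrix (Fin (m + 1)) (Fin (n + 1)) ℝ)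
    (v w : Str m × Str n) : ℝ :=
  Vr R v.1 w.2 + Vc C w.1 v.2

/-- Positive semi-definite game. -/
def IsPSD {m n : ℕ} (R C : Matrix (Fin (m + 1)) (Fin (n + 1)) ℝ) : Prop :=
  ∀ v w : Str m × Str n, v.1 ∈ simplexSet m → v.2 ∈ simplexSet n →
    w.1 ∈ simplexSet m → w.2 ∈ simplexSet n →
    0 ≤ Phi R C w w - Phi R C w v - Phi R C v w + Phi R C v v

/-- u_r = r₁ − r₂ − b_r e for a 2×(n+1) game. -/
def uR {n : ℕ} (R : Matrix (Fin 2) (Fin (n + 1)) ℝ) : Fin n → ℝ := fun j =>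
  R 0 j.castSucc - R 1 j.castSucc - (R 0 (Fin.last n) - R 1 (Fin.last n))

/-- u_c = c₁ − c₂ − (c_{1n} − c_{2n}) e for a 2×(n+1) game. -/
def uC {n : ℕ} (C : Matrix (Fin 2) (Fin (n + 1)) ℝ) : Fin n → ℝ := fun j =>
  C 0 j.castSucc - C 1 j.castSucc - (C 0 (Fin.last n) - C 1 (Fin.last n))

end

section Aux

open scoped RealInnerProductSpace

lemma simplexSet_convex (m : ℕ) : Convex ℝ (simplexSet m) := by
  intro x hx y hy s t hs ht hst
  constructor
  · intro i
    have h : (s • x + t • y) i = s * x i + t * y i := rfl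
    rw [h]
    exact add_nonneg (mul_nonneg hs (hx.1 i)) (mul_nonneg ht (hy.1 i))
  · have h : ∑ i, (s • x + t • y) i = s * ∑ i, x i + t * ∑ i, y i := by
      simp [Finset.mul_sum, Finset.sum_add_distrib]
    rw [h]
    calc s * ∑ i, x i + t * ∑ i, y i ≤ s * 1 + t * 1 := by
          gcongr; exacts [hx.2, hy.2]
      _ = 1 := by linarith

lemma proj_varineq {m : ℕ} {Δ : Set (Str m)} (hΔ : Convex ℝ Δ)
    {P : Str m → Str m} (hP : IsProjOn Δ P) (u : Str m) :
    ∀ z ∈ Δ, ⟪u - P u, z - P u⟫ ≤ 0 := by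
  have hmem := (hP u).1
  have hmin := (hP u).2
  have : Nonempty Δ := ⟨⟨P u, hmem⟩⟩
  rw [← norm_eq_iInf_iff_real_inner_le_zero hΔ hmem]
  apply le_antisymm
  · exact le_ciInf fun w => by
      simpa [dist_eq_norm] using hmin w w.2
  · exact ciInf_le ⟨0, fun r ⟨w, hw⟩ => hw ▸ norm_nonneg _⟩ (⟨P u, hmem⟩ : Δ)

lemma proj_grad_zero {m : ℕ} {Δ : Set (Str m)} (hΔ : Convex ℝ Δ)
    {P : Str m → Str m} (hP : IsProjOn Δ P) (x v : Str m)
    (h : Filter.Tendsto (fun η : ℝ => η⁻¹ • (P (x + η • v) - x))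
      (nhdsWithin 0 (Set.Ioi 0)) (nhds 0)) :
    ∀ z ∈ Δ, ⟪v, z - x⟫ ≤ 0 := by
  intro z hz
  set g : ℝ → Str m := fun η => η⁻¹ • (P (x + η • v) - x) with hg
  have hη : Filter.Tendsto (fun η : ℝ => η) (nhdsWithin (0:ℝ) (Set.Ioi 0)) (nhds 0) :=
    tendsto_id.mono_left nhdsWithin_le_nhds
  have hηg : Filter.Tendsto (fun η : ℝ => η • g η) (nhdsWithin (0:ℝ) (Set.Ioi 0))
      (nhds 0) := by
    have := hη.smul h
    simpa using this
  -- inner products tend to ⟪v, z - x⟫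
  have hlim : Filter.Tendsto (fun η : ℝ => ⟪v - g η, z - x - η • g η⟫)
      (nhdsWithin (0:ℝ) (Set.Ioi 0)) (nhds ⟪v, z - x⟫) := by
    have h1 : Filter.Tendsto (fun η : ℝ => v - g η) (nhdsWithin (0:ℝ) (Set.Ioi 0))
        (nhds v) := by simpa using (tendsto_const_nhds (x := v)).sub h
    have h2 : Filter.Tendsto (fun η : ℝ => z - x - η • g η)
        (nhdsWithin (0:ℝ) (Set.Ioi 0)) (nhds (z - x)) := by
      simpa using (tendsto_const_nhds (x := z - x)).sub hηg
    simpa using h1.inner h2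
  refine le_of_tendsto hlim ?_
  filter_upwards [self_mem_nhdsWithin] with η (hηpos : 0 < η)
  -- variational inequality at u = x + η • v
  have hvi := proj_varineq hΔ hP (x + η • v) z hz
  have hPeq : P (x + η • v) = x + η • g η := by
    simp [hg, smul_smul, mul_inv_cancel₀ hηpos.ne']
  rw [hPeq] at hvi
  have he1 : x + η • v - (x + η • g η) = η • (v - g η) := by
    rw [smul_sub]; abel
  have he2 : z - (x + η • g η) = z - x - η • g η := by abel
  rw [he1, he2, real_inner_smul_left] at hvi
  nlinarith [hvi]

lemma dot_snoc {k : ℕ} (x : Str k) (w : Fin (k + 1) → ℝ) :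
    tilde x ⬝ᵥ w = (∑ i, x i * (w i.castSucc - w (Fin.last k))) + w (Fin.last k) := by
  simp only [dotProduct, tilde, Fin.sum_univ_castSucc, Fin.snoc_castSucc,
    Fin.snoc_last, mul_sub, Finset.sum_sub_distrib, ← Finset.sum_mul]
  ring

lemma inner_grad {k : ℕ} (f : Fin k → ℝ) (y : Str k) :
    ⟪((WithLp.equiv 2 _).symm f : Str k), y⟫ = ∑ i, f i * y i := by
  simp [PiLp.inner_apply, mul_comm]

end Aux

/-- Lemma 1: if the projected partial derivatives at
(α*, β*) ∈ Δ₁ × Δ₂ vanish, then (α*, β*) is a Nash equilibrium. -/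
theorem stmt0 {m n : ℕ} (R C : Matrix (Fin (m + 1)) (Fin (n + 1)) ℝ)
    (P₁ : Str m → Str m) (P₂ : Str n → Str n)
    (hP₁ : IsProjOn (simplexSet m) P₁) (hP₂ : IsProjOn (simplexSet n) P₂)
    (αs : Str m) (βs : Str n)
    (hαs : αs ∈ simplexSet m) (hβs : βs ∈ simplexSet n)
    (hPα : Filter.Tendsto (fun η : ℝ => η⁻¹ • (P₁ (αs + η • gradR R βs) - αs))
      (nhdsWithin 0 (Set.Ioi 0)) (nhds 0))
    (hPβ : Filter.Tendsto (fun η : ℝ => η⁻¹ • (P₂ (βs + η • gradC C αs) - βs))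
      (nhdsWithin 0 (Set.Ioi 0)) (nhds 0)) :
    IsNash R C αs βs := by
  have hα := proj_grad_zero (simplexSet_convex m) hP₁ αs (gradR R βs) hPα
  have hβ := proj_grad_zero (simplexSet_convex n) hP₂ βs (gradC C αs) hPβ
  refine ⟨hαs, hβs, ?_, ?_⟩
  · intro α' hα'
    have hinner := hα α' hα'
    rw [show gradR R βs = (WithLp.equiv 2 _).symm
        (fun i : Fin m => (R *ᵥ tilde βs) i.castSucc - (R *ᵥ tilde βs) (Fin.last m))
      from rfl, inner_grad] at hinner
    have h1 : Vr R α' βs = (∑ i, α' i * ((R *ᵥ tilde βs) i.castSucc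
        - (R *ᵥ tilde βs) (Fin.last m))) + (R *ᵥ tilde βs) (Fin.last m) := dot_snoc _ _
    have h2 : Vr R αs βs = (∑ i, αs i * ((R *ᵥ tilde βs) i.castSucc
        - (R *ᵥ tilde βs) (Fin.last m))) + (R *ᵥ tilde βs) (Fin.last m) := dot_snoc _ _
    have hsum : ∑ i, ((R *ᵥ tilde βs) i.castSucc - (R *ᵥ tilde βs) (Fin.last m))
        * (α' - αs) i ≤ 0 := hinner
    have hexp : ∀ i, (α' - αs) i = α' i - αs i := fun i => rfl
    rw [h1, h2]
    have : ∑ i, ((R *ᵥ tilde βs) i.castSucc - (R *ᵥ tilde βs) (Fin.last m))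
        * (α' i - αs i) ≤ 0 := by
      simpa only [hexp] using hsum
    have hdiff : (∑ i, α' i * ((R *ᵥ tilde βs) i.castSucc
          - (R *ᵥ tilde βs) (Fin.last m)))
        - ∑ i, αs i * ((R *ᵥ tilde βs) i.castSucc - (R *ᵥ tilde βs) (Fin.last m))
        = ∑ i, ((R *ᵥ tilde βs) i.castSucc - (R *ᵥ tilde βs) (Fin.last m))
        * (α' i - αs i) := by
      rw [← Finset.sum_sub_distrib]; congr 1; ext i; ring
    linarith [hdiff ▸ this]
  · intro β' hβ'
    have hinner := hβ β' hβ'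
    rw [show gradC C αs = (WithLp.equiv 2 _).symm
        (fun j : Fin n => (Cᵀ *ᵥ tilde αs) j.castSucc - (Cᵀ *ᵥ tilde αs) (Fin.last n))
      from rfl, inner_grad] at hinner
    have hVc : ∀ β : Str n, Vc C αs β = tilde β ⬝ᵥ (Cᵀ *ᵥ tilde αs) := by
      intro β
      rw [Vc, Matrix.dotProduct_mulVec, dotProduct_comm, Matrix.mulVec_transpose]
    have h1 : Vc C αs β' = (∑ j, β' j * ((Cᵀ *ᵥ tilde αs) j.castSucc
        - (Cᵀ *ᵥ tilde αs) (Fin.last n))) + (Cᵀ *ᵥ tilde αs) (Fin.last n) := by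
      rw [hVc]; exact dot_snoc _ _
    have h2 : Vc C αs βs = (∑ j, βs j * ((Cᵀ *ᵥ tilde αs) j.castSucc
        - (Cᵀ *ᵥ tilde αs) (Fin.last n))) + (Cᵀ *ᵥ tilde αs) (Fin.last n) := by
      rw [hVc]; exact dot_snoc _ _
    have hexp : ∀ j, (β' - βs) j = β' j - βs j := fun j => rfl
    have hsum : ∑ j, ((Cᵀ *ᵥ tilde αs) j.castSucc - (Cᵀ *ᵥ tilde αs) (Fin.last n))
        * (β' j - βs j) ≤ 0 := by
      simpa only [hexp] using hinner
    rw [h1, h2]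
    have hdiff : (∑ j, β' j * ((Cᵀ *ᵥ tilde αs) j.castSucc
          - (Cᵀ *ᵥ tilde αs) (Fin.last n)))
        - ∑ j, βs j * ((Cᵀ *ᵥ tilde αs) j.castSucc - (Cᵀ *ᵥ tilde αs) (Fin.last n))
        = ∑ j, ((Cᵀ *ᵥ tilde αs) j.castSucc - (Cᵀ *ᵥ tilde αs) (Fin.last n))
        * (β' j - βs j) := by
      rw [← Finset.sum_sub_distrib]; congr 1; ext j; ring
    linarith [hdiff ▸ hsum]
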